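/- Let m be a nonnegative integer and let 𝒮 be a finite simplicial complex with every vertex of degree at least m+1 and nonempty vertex set V. Then |𝒮| > β(m)·|V|, where β(m) = ∑_{F ∈ ℛ(m+1)} 1/(|F|+1) and ℛ(ℓ) denotes the first ℓ elements of all finite subsets of ℕ in the colex order ◁ (A ◁ B iff max(A △ B) ∈ B). -/

import Mathlib

/-- The colex value of a finite set of naturals. -/
def colexVal (A : Finset ℕ) : ℕ := ∑ i ∈ A, 2 ^ i

namespace FranklAux

/-- The finset of binary digits of `n`. -/
def E (n : ℕ) : Finset ℕ := n.bitIndices.toFinset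

lemma colexVal_E (n : ℕ) : colexVal (E n) = n := Finset.twoPowSum_toFinset_bitIndices n

lemma E_colexVal (A : Finset ℕ) : E (colexVal A) = A := Finset.toFinset_bitIndices_twoPowSum A

lemma colexVal_injective : Function.Injective colexVal := by
  intro A B h
  rw [← E_colexVal A, ← E_colexVal B, h]

lemma mem_E_lt {n t : ℕ} (hn : n < 2 ^ t) {a : ℕ} (ha : a ∈ E n) : a < t := by
  have h2 : (2:ℕ) ^ a ≤ n := Nat.two_pow_le_of_mem_bitIndices (List.mem_toFinset.1 ha)
  by_contra hle
  push_neg at hle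
  exact absurd (le_trans (Nat.pow_le_pow_right (by norm_num) hle) h2) (not_le.2 hn)

lemma not_mem_E {n t : ℕ} (hn : n < 2 ^ t) : t ∉ E n := fun h => lt_irrefl t (mem_E_lt hn h)

lemma E_pow_add {t n : ℕ} (hn : n < 2 ^ t) : E (2 ^ t + n) = insert t (E n) := by
  apply colexVal_injective
  rw [colexVal_E]
  unfold colexVal
  rw [Finset.sum_insert (not_mem_E hn)]
  have := colexVal_E n
  unfold colexVal at this
  rw [this]

/-- popcount -/
def s (n : ℕ) : ℕ := (E n).card

lemma s_zero : s 0 = 0 := by simp [s, E]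

lemma s_pow_add {t n : ℕ} (hn : n < 2 ^ t) : s (2 ^ t + n) = s n + 1 := by
  rw [s, E_pow_add hn, Finset.card_insert_of_notMem (not_mem_E hn), s]

/-- Sum of weights over colex initial segment of length `x`. -/
def G (w : ℕ → ℚ) (x : ℕ) : ℚ := ∑ n ∈ Finset.range x, w (s n)

def shift (w : ℕ → ℚ) : ℕ → ℚ := fun j => w (j + 1)

/-- A valid weight: nonneg and nonincreasing. -/
def Wgt (w : ℕ → ℚ) : Prop := (∀ j, 0 ≤ w j) ∧ ∀ j, w (j + 1) ≤ w j

lemma wgt_shift {w : ℕ → ℚ} (h : Wgt w) : Wgt (shift w) :=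
  ⟨fun j => h.1 (j+1), fun j => h.2 (j+1)⟩

lemma shift_le {w : ℕ → ℚ} (h : Wgt w) : ∀ j, shift w j ≤ w j := fun j => h.2 j

lemma G_mono {w : ℕ → ℚ} (hw : ∀ j, 0 ≤ w j) {x y : ℕ} (h : x ≤ y) : G w x ≤ G w y := by
  unfold G
  apply Finset.sum_le_sum_of_subset_of_nonneg (Finset.range_subset_range.2 h)
  exact fun i _ _ => hw _

lemma G_le_G {u v : ℕ → ℚ} (h : ∀ j, u j ≤ v j) (x : ℕ) : G u x ≤ G v x :=
  Finset.sum_le_sum fun i _ => h _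

lemma G_nonneg {w : ℕ → ℚ} (hw : ∀ j, 0 ≤ w j) (x : ℕ) : 0 ≤ G w x :=
  Finset.sum_nonneg fun i _ => hw _

lemma G_pow_add (w : ℕ → ℚ) {t x : ℕ} (hx : x ≤ 2 ^ t) :
    G w (2 ^ t + x) = G w (2 ^ t) + G (shift w) x := by
  unfold G
  rw [Finset.sum_range_add]
  congr 1
  apply Finset.sum_congr rfl
  intro n hn
  rw [s_pow_add (lt_of_lt_of_le (Finset.mem_range.1 hn) hx)]
  rfl

/-- Difference comparison: `G u P - G u e ≤ G v P - G v e` for `u ≤ v`. -/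
lemma G_diff_le {u v : ℕ → ℚ} (h : ∀ j, u j ≤ v j) {e P : ℕ} (he : e ≤ P) :
    G u P - G u e ≤ G v P - G v e := by
  have key : ∀ f : ℕ → ℚ, G f P = G f e + ∑ n ∈ Finset.Ico e P, f (s n) := by
    intro f
    unfold G
    rw [Finset.range_eq_Ico, Finset.range_eq_Ico]
    exact (Finset.sum_Ico_consecutive (fun n => f (s n)) (Nat.zero_le e) he).symm
  rw [key u, key v]
  have : ∑ n ∈ Finset.Ico e P, u (s n) ≤ ∑ n ∈ Finset.Ico e P, v (s n) :=
    Finset.sum_le_sum fun i _ => h _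
  linarith


lemma G_zero (w : ℕ → ℚ) : G w 0 = 0 := by simp [G]

lemma G_one (w : ℕ → ℚ) : G w 1 = w 0 := by simp [G, s_zero]

lemma shift_apply (w : ℕ → ℚ) (j : ℕ) : shift w j = w (j + 1) := rfl

lemma wgt_nonneg {w : ℕ → ℚ} (h : Wgt w) : ∀ j, 0 ≤ w j := h.1

lemma wgt_step {w : ℕ → ℚ} (h : Wgt w) : ∀ j, w (j + 1) ≤ w j := h.2

def UPart (N : ℕ) : Prop :=
  ∀ w, Wgt w → ∀ a b, b ≤ a → a + b ≤ N → G w (a + b) ≤ G w a + G (shift w) b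

def NPart (N : ℕ) : Prop :=
  ∀ v u, Wgt v → Wgt u → (∀ j, u j ≤ v j) → ∀ t x y e, x ≤ 2 ^ t → y ≤ 2 ^ t →
    x + y = 2 ^ t + e → 2 ^ (t + 1) ≤ N →
    G u (2 ^ t) + G v e ≤ G v x + G u y

theorem main : ∀ N, UPart N ∧ NPart N := by
  intro N
  induction N using Nat.strong_induction_on with
  | _ N IH =>
  have sub : ∀ w, Wgt w → ∀ x y, x + y < N → G w (x + y) ≤ G w x + G w y := by
    intro w hw x y hxy
    rcases le_total y x with h | h
    · refine le_trans ((IH _ hxy).1 w hw x y h le_rfl) ?_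
      have := G_le_G (shift_le hw) y; linarith
    · rw [add_comm x y]
      have h2 := (IH (y + x) (show y + x < N by omega)).1 w hw y x h le_rfl
      have := G_le_G (shift_le hw) x; linarith
  constructor
  · -- UPart N
    intro w hw a b hba hab
    rcases Nat.eq_zero_or_pos b with rfl | hb
    · simp [G_zero]
    have ha : 0 < a := lt_of_lt_of_le hb hba
    set t := Nat.log 2 a with htdef
    have hpa : 2 ^ t ≤ a := Nat.pow_log_le_self 2 ha.ne'
    have hap : a < 2 ^ (t + 1) := Nat.lt_pow_succ_log_self (by norm_num) a
    have hP2 : (2:ℕ) ^ (t + 1) = 2 ^ t + 2 ^ t := by rw [pow_succ]; omega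
    obtain ⟨r, hr, hrp⟩ : ∃ r, a = 2 ^ t + r ∧ r < 2 ^ t := ⟨a - 2 ^ t, by omega, by omega⟩
    have e3 : G w a = G w (2 ^ t) + G (shift w) r := by rw [hr]; exact G_pow_add w hrp.le
    have e2 : G w (2 ^ (t+1)) = G w (2 ^ t) + G (shift w) (2 ^ t) := by
      rw [hP2]; exact G_pow_add w le_rfl
    by_cases hbp : 2 ^ t ≤ b
    · obtain ⟨q, hq, hqr⟩ : ∃ q, b = 2 ^ t + q ∧ q ≤ r := ⟨b - 2 ^ t, by omega, by omega⟩
      have hab2 : a + b = 2 ^ (t+1) + (r + q) := by omega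
      have e1 : G w (a + b) = G w (2 ^ (t+1)) + G (shift w) (r + q) := by
        rw [hab2]; exact G_pow_add w (by omega)
      have e4 : G (shift w) b = G (shift w) (2 ^ t) + G (shift (shift w)) q := by
        rw [hq]; exact G_pow_add (shift w) (by omega)
      have e5 : G (shift w) (r + q) ≤ G (shift w) r + G (shift (shift w)) q := by
        have h2 : (2:ℕ) ≤ 2 ^ (t+1) := by
          calc (2:ℕ) = 2 ^ 1 := rfl
          _ ≤ 2 ^ (t+1) := Nat.pow_le_pow_right (by norm_num) (by omega)
        exact (IH (r + q) (by omega)).1 (shift w) (wgt_shift hw) r q hqr le_rfl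
      linarith
    · push_neg at hbp
      by_cases hrb : r + b ≤ 2 ^ t
      · have e1 : G w (a + b) = G w (2 ^ t) + G (shift w) (r + b) := by
          have : a + b = 2 ^ t + (r + b) := by omega
          rw [this]; exact G_pow_add w hrb
        have e5 : G (shift w) (r + b) ≤ G (shift w) r + G (shift w) b := by
          have hp1 : (1:ℕ) ≤ 2 ^ t := Nat.one_le_two_pow
          exact sub (shift w) (wgt_shift hw) r b (by omega)
        linarith
      · push_neg at hrb
        obtain ⟨e, he, he1⟩ : ∃ e, r + b = 2 ^ t + e ∧ 1 ≤ e := ⟨r + b - 2 ^ t, by omega, by omega⟩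
        have hab2 : a + b = 2 ^ (t+1) + e := by omega
        have e1 : G w (a + b) = G w (2 ^ (t+1)) + G (shift w) e := by
          rw [hab2]; exact G_pow_add w (by omega)
        have key : G (shift w) (2 ^ t) + G (shift w) e ≤ G (shift w) r + G (shift w) b :=
          (IH (2 ^ (t+1)) (by omega)).2 (shift w) (shift w) (wgt_shift hw) (wgt_shift hw)
            (fun j => le_rfl) t r b e hrp.le hbp.le he le_rfl
        linarith
  · -- NPart N
    intro v u hv hu huv t x y e hx hy hxye hNt
    cases t with
    | zero =>
      have h1 : (2:ℕ) ^ 0 = 1 := rfl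
      rw [h1] at hx hy hxye ⊢
      interval_cases x <;> interval_cases y
      · omega
      · obtain rfl : e = 0 := by omega
        simp [G_zero]
      · obtain rfl : e = 0 := by omega
        simp only [G_zero, G_one]
        have := huv 0; linarith
      · obtain rfl : e = 1 := by omega
        linarith
    | succ s =>
      have hP : (2:ℕ) ^ (s+1) = 2 ^ s + 2 ^ s := by rw [pow_succ]; omega
      have hp0 : (1:ℕ) ≤ 2 ^ s := Nat.one_le_two_pow
      have hsN : 2 ^ (s + 1) < N := by omega
      have hsN' : 2 ^ s < N := by
        have hp1 : (1:ℕ) ≤ 2 ^ s := Nat.one_le_two_pow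
        omega
      have eU : G u (2 ^ (s+1)) = G u (2 ^ s) + G (shift u) (2 ^ s) := by
        rw [hP]; exact G_pow_add u le_rfl
      by_cases hxP : 2 ^ s ≤ x <;> by_cases hyP : 2 ^ s ≤ y
      · -- both large
        obtain ⟨x', hx', hx'2⟩ : ∃ x', x = 2 ^ s + x' ∧ x' ≤ 2 ^ s := ⟨x - 2 ^ s, by omega, by omega⟩
        obtain ⟨y', hy', hy'2⟩ : ∃ y', y = 2 ^ s + y' ∧ y' ≤ 2 ^ s := ⟨y - 2 ^ s, by omega, by omega⟩
        have he' : x' + y' = e := by omega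
        have ex : G v x = G v (2 ^ s) + G (shift v) x' := by rw [hx']; exact G_pow_add v hx'2
        have ey : G u y = G u (2 ^ s) + G (shift u) y' := by rw [hy']; exact G_pow_add u hy'2
        by_cases hes : e ≤ 2 ^ s
        · have d1 : G (shift u) (2 ^ s) - G (shift u) e ≤ G v (2 ^ s) - G v e :=
            G_diff_le (fun j => by have := shift_le hu j; have := huv j; linarith) hes
          have d2 : G (shift u) e ≤ G (shift u) x' + G (shift u) y' := by
            rw [← he']
            exact sub (shift u) (wgt_shift hu) x' y' (by omega)
          have d3 : G (shift u) x' ≤ G (shift v) x' :=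
            G_le_G (fun j => by rw [shift_apply, shift_apply]; exact huv (j+1)) x'
          linarith
        · obtain ⟨e', hee, hee2⟩ : ∃ e', e = 2 ^ s + e' ∧ e' ≤ 2 ^ s :=
            ⟨e - 2 ^ s, by omega, by omega⟩
          have ev : G v e = G v (2 ^ s) + G (shift v) e' := by rw [hee]; exact G_pow_add v hee2
          have key : G (shift u) (2 ^ s) + G (shift v) e' ≤ G (shift v) x' + G (shift u) y' :=
            (IH (2 ^ (s+1)) hsN).2 (shift v) (shift u) (wgt_shift hv) (wgt_shift hu)
              (fun j => by rw [shift_apply, shift_apply]; exact huv (j+1)) s x' y' e'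
              hx'2 hy'2 (by omega) le_rfl
          linarith
      · -- x large, y small
        obtain ⟨x', hx', hx'2⟩ : ∃ x', x = 2 ^ s + x' ∧ x' ≤ 2 ^ s := ⟨x - 2 ^ s, by omega, by omega⟩
        have hey : e ≤ y := by omega
        have hes : e ≤ 2 ^ s := by omega
        have ex : G v x = G v (2 ^ s) + G (shift v) x' := by rw [hx']; exact G_pow_add v hx'2
        have d1 : G u (2 ^ s) - G u e ≤ G v (2 ^ s) - G v e := G_diff_le huv hes
        have key : G (shift u) (2 ^ s) + G u e ≤ G u y + G (shift u) x' :=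
          (IH (2 ^ (s+1)) hsN).2 u (shift u) hu (wgt_shift hu) (shift_le hu) s y x' e
            (by omega) hx'2 (by omega) le_rfl
        have d3 : G (shift u) x' ≤ G (shift v) x' :=
          G_le_G (fun j => by rw [shift_apply, shift_apply]; exact huv (j+1)) x'
        linarith
      · -- x small, y large
        obtain ⟨y', hy', hy'2⟩ : ∃ y', y = 2 ^ s + y' ∧ y' ≤ 2 ^ s := ⟨y - 2 ^ s, by omega, by omega⟩
        have ey : G u y = G u (2 ^ s) + G (shift u) y' := by rw [hy']; exact G_pow_add u hy'2
        have key : G (shift u) (2 ^ s) + G v e ≤ G v x + G (shift u) y' :=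
          (IH (2 ^ (s+1)) hsN).2 v (shift u) hv (wgt_shift hu)
            (fun j => by rw [shift_apply]; have := wgt_step hu j; have := huv j; linarith)
            s x y' e (by omega) hy'2 (by omega) le_rfl
        linarith
      · omega

lemma downset_sum : ∀ n : ℕ, ∀ w : ℕ → ℚ, Wgt w → ∀ L : Finset (Finset ℕ), L.card ≤ n →
    (∀ A ∈ L, ∀ B ⊆ A, B ∈ L) → G w L.card ≤ ∑ F ∈ L, w F.card := by
  intro n
  induction n with
  | zero =>
    intro w hw L hL _
    have hL0 : L = ∅ := Finset.card_eq_zero.1 (Nat.le_zero.1 hL)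
    subst hL0; simp [G_zero]
  | succ n ihn =>
    intro w hw L hL hdc
    rcases Finset.eq_empty_or_nonempty L with rfl | hne
    · simp [G_zero]
    obtain ⟨A₀, hA₀⟩ := hne
    have hempty : (∅ : Finset ℕ) ∈ L := hdc A₀ hA₀ ∅ (Finset.empty_subset _)
    rcases Finset.eq_empty_or_nonempty (L.sup id) with hsup | ⟨x, hx⟩
    · have hLsing : L = {∅} := by
        apply Finset.eq_singleton_iff_unique_mem.2
        refine ⟨hempty, fun A hA => ?_⟩
        have h1 : A ⊆ L.sup id := Finset.le_sup (f := id) hA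
        rw [hsup] at h1
        exact Finset.subset_empty.1 h1
      rw [hLsing]
      simp [G_one]
    · set T := L.filter (fun F => x ∈ F) with hT
      set L₀ := L.filter (fun F => x ∉ F) with hL₀
      have hxT : ∀ F ∈ T, x ∈ F := fun F hF => (Finset.mem_filter.1 hF).2
      have hinj : ∀ F ∈ T, ∀ F' ∈ T, F.erase x = F'.erase x → F = F' := by
        intro F hF F' hF' h
        rw [← Finset.insert_erase (hxT F hF), ← Finset.insert_erase (hxT F' hF'), h]
      set L₁ := T.image (fun F => F.erase x) with hL₁
      have hcard1 : L₁.card = T.card := Finset.card_image_of_injOn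
        (fun F hF F' hF' h => hinj F hF F' hF' h)
      have hsplit : T.card + L₀.card = L.card :=
        Finset.card_filter_add_card_filter_not (p := fun F => x ∈ F)
      have hmemL₁ : ∀ A ∈ L₁, A ∈ L ∧ x ∉ A := by
        intro A hA
        obtain ⟨F, hF, rfl⟩ := Finset.mem_image.1 hA
        exact ⟨hdc F (Finset.mem_filter.1 hF).1 _ (Finset.erase_subset _ _),
          Finset.notMem_erase _ _⟩
      have hsub : L₁ ⊆ L₀ := fun A hA =>
        Finset.mem_filter.2 ⟨(hmemL₁ A hA).1, (hmemL₁ A hA).2⟩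
      have hdc₀ : ∀ A ∈ L₀, ∀ B ⊆ A, B ∈ L₀ := by
        intro A hA B hBA
        rw [Finset.mem_filter] at hA ⊢
        exact ⟨hdc A hA.1 B hBA, fun hxB => hA.2 (hBA hxB)⟩
      have hdc₁ : ∀ A ∈ L₁, ∀ B ⊆ A, B ∈ L₁ := by
        intro A hA B hBA
        obtain ⟨hAL, hxA⟩ := hmemL₁ A hA
        have hxB : x ∉ B := fun h => hxA (hBA h)
        obtain ⟨F, hF, rfl⟩ := Finset.mem_image.1 hA
        have h1 : insert x B ∈ L := by
          apply hdc F (Finset.mem_filter.1 hF).1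
          intro y hy
          rcases Finset.mem_insert.1 hy with rfl | hy
          · exact hxT F hF
          · exact Finset.erase_subset _ _ (hBA hy)
        refine Finset.mem_image.2 ⟨insert x B,
          Finset.mem_filter.2 ⟨h1, Finset.mem_insert_self x B⟩, ?_⟩
        rw [Finset.erase_insert hxB]
      have hc₀pos : 0 < L₀.card :=
        Finset.card_pos.2 ⟨∅, Finset.mem_filter.2 ⟨hempty, by simp⟩⟩
      have hTpos : 0 < T.card := by
        obtain ⟨F, hF, hxF⟩ := Finset.mem_sup.1 hx
        exact Finset.card_pos.2 ⟨F, Finset.mem_filter.2 ⟨hF, hxF⟩⟩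
      have hc1le : L₁.card ≤ L₀.card := Finset.card_le_card hsub
      have hsum : ∑ F ∈ L, w F.card = (∑ F ∈ L₀, w F.card) + ∑ F ∈ L₁, shift w F.card := by
        rw [hL₁, Finset.sum_image hinj]
        have h2 : ∑ F ∈ T, shift w (F.erase x).card = ∑ F ∈ T, w F.card := by
          apply Finset.sum_congr rfl
          intro F hF
          rw [shift_apply, Finset.card_erase_add_one (hxT F hF)]
        rw [h2, add_comm]
        exact (Finset.sum_filter_add_sum_filter_not L (fun F => x ∈ F) (fun F => w F.card)).symm
      have main1 : G w L.card ≤ G w L₀.card + G (shift w) L₁.card := by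
        have h3 : L.card = L₀.card + L₁.card := by omega
        rw [h3]
        exact (main (L₀.card + L₁.card)).1 w hw _ _ hc1le le_rfl
      have i0 : G w L₀.card ≤ ∑ F ∈ L₀, w F.card := ihn w hw L₀ (by omega) hdc₀
      have i1 : G (shift w) L₁.card ≤ ∑ F ∈ L₁, shift w F.card :=
        ihn (shift w) (wgt_shift hw) L₁ (by omega) hdc₁
      rw [hsum]
      linarith

end FranklAux

theorem frankl_lower_bound (m : ℕ) (S : Finset (Finset ℕ)) (hne : S.Nonempty)
    (hdc : ∀ A ∈ S, ∀ B ⊆ A, B ∈ S) (hV : (S.sup id).Nonempty)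
    (hdeg : ∀ x ∈ S.sup id, m + 1 ≤ (S.filter (fun e => x ∈ e)).card)
    (R : Finset (Finset ℕ)) (hR : ∀ A : Finset ℕ, A ∈ R ↔ colexVal A < m + 1) :
    (∑ F ∈ R, (1 : ℚ) / ((F.card : ℚ) + 1)) * ((S.sup id).card : ℚ) < (S.card : ℚ) := by
  classical
  set w : ℕ → ℚ := fun j => 1 / ((j : ℚ) + 1) with hwdef
  have hw : FranklAux.Wgt w := by
    constructor
    · intro j; positivity
    · intro j
      apply one_div_le_one_div_of_le
      · positivity
      · push_cast; linarith
  obtain ⟨A₀, hA₀⟩ := hne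
  have hempty : (∅ : Finset ℕ) ∈ S := hdc A₀ hA₀ ∅ (Finset.empty_subset _)
  -- Step A : β = G w (m+1)
  have hRimg : R = (Finset.range (m+1)).image FranklAux.E := by
    ext A
    rw [hR, Finset.mem_image]
    constructor
    · intro h
      exact ⟨colexVal A, Finset.mem_range.2 h, FranklAux.E_colexVal A⟩
    · rintro ⟨n, hn, rfl⟩
      rw [FranklAux.colexVal_E]
      exact Finset.mem_range.1 hn
  have hEinj : ∀ a ∈ Finset.range (m+1), ∀ b ∈ Finset.range (m+1),
      FranklAux.E a = FranklAux.E b → a = b := by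
    intro a _ b _ h
    rw [← FranklAux.colexVal_E a, ← FranklAux.colexVal_E b, h]
  have hbeta : ∑ F ∈ R, (1:ℚ)/((F.card : ℚ)+1) = FranklAux.G w (m+1) := by
    rw [hRimg, Finset.sum_image hEinj]
    unfold FranklAux.G
    apply Finset.sum_congr rfl
    intro n _
    rfl
  -- Step B : per-vertex bound
  have hvert : ∀ x ∈ S.sup id, FranklAux.G w (m+1) ≤
      ∑ F ∈ S.filter (fun e => x ∈ e), (1:ℚ) / (F.card : ℚ) := by
    intro x hx
    set T := S.filter (fun e => x ∈ e) with hTdef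
    have hxT : ∀ F ∈ T, x ∈ F := fun F hF => (Finset.mem_filter.1 hF).2
    have hinj : ∀ F ∈ T, ∀ F' ∈ T, F.erase x = F'.erase x → F = F' := by
      intro F hF F' hF' h
      rw [← Finset.insert_erase (hxT F hF), ← Finset.insert_erase (hxT F' hF'), h]
    set Lx := T.image (fun F => F.erase x) with hLx
    have hcard : Lx.card = T.card := Finset.card_image_of_injOn
      (fun F hF F' hF' h => hinj F hF F' hF' h)
    have hdcx : ∀ A ∈ Lx, ∀ B ⊆ A, B ∈ Lx := by
      intro A hA B hBA
      obtain ⟨F, hF, rfl⟩ := Finset.mem_image.1 hA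
      have hxB : x ∉ B := fun h => Finset.notMem_erase x F (hBA h)
      have h1 : insert x B ∈ S := by
        apply hdc F (Finset.mem_filter.1 hF).1
        intro y hy
        rcases Finset.mem_insert.1 hy with rfl | hy
        · exact hxT F hF
        · exact Finset.erase_subset _ _ (hBA hy)
      refine Finset.mem_image.2 ⟨insert x B,
        Finset.mem_filter.2 ⟨h1, Finset.mem_insert_self x B⟩, ?_⟩
      rw [Finset.erase_insert hxB]
    have h2 := FranklAux.downset_sum Lx.card w hw Lx le_rfl hdcx
    have h1 : FranklAux.G w (m+1) ≤ FranklAux.G w Lx.card := by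
      apply FranklAux.G_mono hw.1
      rw [hcard]
      exact hdeg x hx
    have h3 : ∑ F ∈ Lx, w F.card = ∑ F ∈ T, (1:ℚ)/(F.card : ℚ) := by
      rw [hLx, Finset.sum_image hinj]
      apply Finset.sum_congr rfl
      intro F hF
      have hc : (F.erase x).card + 1 = F.card := Finset.card_erase_add_one (hxT F hF)
      show (1:ℚ)/(((F.erase x).card : ℚ)+1) = 1/(F.card : ℚ)
      rw [← hc]; push_cast; ring_nf
    linarith
  -- Step C : double counting
  have hswap : ∑ x ∈ S.sup id, ∑ F ∈ S.filter (fun e => x ∈ e), (1:ℚ)/(F.card : ℚ)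
      = (S.card : ℚ) - 1 := by
    have h1 : ∀ x : ℕ, ∑ F ∈ S.filter (fun e => x ∈ e), (1:ℚ)/(F.card : ℚ)
        = ∑ F ∈ S, if x ∈ F then (1:ℚ)/(F.card : ℚ) else 0 := fun x =>
      Finset.sum_filter (fun e => x ∈ e) (fun F : Finset ℕ => (1:ℚ)/(F.card : ℚ))
    simp_rw [h1]
    rw [Finset.sum_comm]
    have h2 : ∀ F ∈ S, (∑ x ∈ S.sup id, if x ∈ F then (1:ℚ)/(F.card : ℚ) else 0)
        = if F = ∅ then 0 else 1 := by
      intro F hF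
      have hFV : F ⊆ S.sup id := Finset.le_sup (f := id) hF
      rw [Finset.sum_ite_mem, Finset.inter_eq_right.2 hFV, Finset.sum_const, nsmul_eq_mul]
      by_cases hF0 : F = ∅
      · subst hF0; simp
      · rw [if_neg hF0, mul_one_div, div_self]
        exact Nat.cast_ne_zero.2 (Finset.card_ne_zero.2 (Finset.nonempty_iff_ne_empty.2 hF0))
    rw [Finset.sum_congr rfl h2]
    have h3 : ∀ F ∈ S, (if F = ∅ then (0:ℚ) else 1) = 1 - if F = ∅ then 1 else 0 := by
      intro F _; split <;> ring
    rw [Finset.sum_congr rfl h3, Finset.sum_sub_distrib, Finset.sum_const, nsmul_eq_mul,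
      mul_one, Finset.sum_ite_eq' S ∅ (fun _ => (1:ℚ)), if_pos hempty]
  -- combine
  have hsum_le : ∑ x ∈ S.sup id, FranklAux.G w (m+1) ≤
      ∑ x ∈ S.sup id, ∑ F ∈ S.filter (fun e => x ∈ e), (1:ℚ)/(F.card : ℚ) :=
    Finset.sum_le_sum hvert
  rw [Finset.sum_const, nsmul_eq_mul, hswap] at hsum_le
  rw [hbeta]
  have hb : 0 ≤ FranklAux.G w (m+1) := FranklAux.G_nonneg hw.1 _
  calc FranklAux.G w (m+1) * ((S.sup id).card : ℚ)
      = ((S.sup id).card : ℚ) * FranklAux.G w (m+1) := mul_comm _ _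
    _ ≤ (S.card : ℚ) - 1 := hsum_le
    _ < (S.card : ℚ) := by linarith
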